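/- If the exact Schur complement and exact velocity solver are used in the lower-triangular preconditioner P_- = [[A,0],[-D,-S]], then GMRES applied to P_-^{-1} M x = P_-^{-1} b converges in at most 2 iterations; formally, since (P_-^{-1}M - I)^2 = 0, for any vector b, the Krylov subspace span{b, (P_-^{-1}M) b, (P_-^{-1}M)^2 b, ...} has dimension at most 2, i.e., (P_-^{-1}M)^2 b lies in the span of b and (P_-^{-1}M) b. -/
import Mathlib


open Matrix

theorem stmt_6 {n m : ℕ}
    (A : Matrix (Fin n) (Fin n) ℝ) (G : Matrix (Fin n) (Fin m) ℝ)
    (D : Matrix (Fin m) (Fin n) ℝ)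
    (S : Matrix (Fin m) (Fin m) ℝ) (hSdef : S = -(D * A⁻¹ * G))
    (hA : IsUnit A.det) (hS : IsUnit S.det)
    (M Pminus T : Matrix (Fin n ⊕ Fin m) (Fin n ⊕ Fin m) ℝ)
    (hM : M = Matrix.fromBlocks A G (-D) (0 : Matrix (Fin m) (Fin m) ℝ))
    (hP : Pminus = Matrix.fromBlocks A (0 : Matrix (Fin n) (Fin m) ℝ) (-D) (-S))
    (hT : T = Pminus⁻¹ * M) :
    ∀ b : Fin n ⊕ Fin m → ℝ, ∃ a c : ℝ,
      (T * T).mulVec b = a • b + c • T.mulVec b := by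
  have hAA : A * A⁻¹ = 1 := Matrix.mul_nonsing_inv A hA
  have hAA' : A⁻¹ * A = 1 := Matrix.nonsing_inv_mul A hA
  have hSS : S * S⁻¹ = 1 := Matrix.mul_nonsing_inv S hS
  have hSS' : S⁻¹ * S = 1 := Matrix.nonsing_inv_mul S hS
  set Q : Matrix (Fin n ⊕ Fin m) (Fin n ⊕ Fin m) ℝ :=
    Matrix.fromBlocks A⁻¹ 0 (-(S⁻¹ * D * A⁻¹)) (-S⁻¹) with hQ
  have hPQ : Pminus * Q = 1 := by
    rw [hP, hQ, Matrix.fromBlocks_multiply, ← Matrix.fromBlocks_one]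
    have h21 : -D * A⁻¹ + -S * -(S⁻¹ * D * A⁻¹) = 0 := by
      rw [show -S * -(S⁻¹ * D * A⁻¹) = S * S⁻¹ * (D * A⁻¹) from by
        simp [Matrix.mul_assoc], hSS]
      simp
    have h22 : -D * (0 : Matrix (Fin n) (Fin m) ℝ) + -S * -S⁻¹ = 1 := by
      simp [hSS]
    rw [h21, h22, hAA]
    simp
  have hPinv : Pminus⁻¹ = Q := Matrix.inv_eq_right_inv hPQ
  have hDAG : D * A⁻¹ * G = -S := by rw [hSdef]; simp
  have hTblock : T = Matrix.fromBlocks 1 (A⁻¹ * G) 0 1 := by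
    rw [hT, hPinv, hM, hQ, Matrix.fromBlocks_multiply]
    have h21 : -(S⁻¹ * D * A⁻¹) * A + -S⁻¹ * -D = 0 := by
      rw [show -(S⁻¹ * D * A⁻¹) * A = -(S⁻¹ * D * (A⁻¹ * A)) from by
        simp [Matrix.mul_assoc], hAA']
      simp
    have h22 : -(S⁻¹ * D * A⁻¹) * G + -S⁻¹ * (0 : Matrix (Fin m) (Fin m) ℝ) = 1 := by
      rw [show -(S⁻¹ * D * A⁻¹) * G = -(S⁻¹ * (D * A⁻¹ * G)) from by
        simp [Matrix.mul_assoc], hDAG]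
      simp [hSS']
    rw [h21, h22, hAA']
    simp
  have hTT : T * T = (2 : ℝ) • T - 1 := by
    rw [hTblock, Matrix.fromBlocks_multiply, ← Matrix.fromBlocks_one,
      Matrix.fromBlocks_smul, sub_eq_add_neg, Matrix.fromBlocks_neg,
      Matrix.fromBlocks_add]
    congr 1 <;> simp [two_smul]
  intro b
  refine ⟨-1, 2, ?_⟩
  rw [hTT, Matrix.sub_mulVec, Matrix.smul_mulVec, Matrix.one_mulVec]
  ext i
  simp
  ring
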